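/- Let P_· be an SPPS solution of the DPRE with 𝒯-periodic data A_k ∈ ℝ^{n×n}, C_k ∈ ℝ^{m×n}, symmetric positive definite Q_k and R_k, and let λ_min(Q_·) = min over one period of the smallest eigenvalue of Q_k and λ_max(P_·) = max over one period of the largest eigenvalue of P_k. Then for every k ∈ ℕ the monodromy matrix Φ_{P_k} satisfies ρ(Φ_{P_k}) ≤ √(1 − λ_min(Q_·)/λ_max(P_·)) and ‖Φ_{P_k}‖₂ ≤ √(λ_max(P_·)/λ_min(Q_·)); in particular Φ_{P_k} is Schur stable. -/

import Mathlib

open Matrix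

/-- A real square matrix is Schur stable if every complex eigenvalue has modulus `< 1`. -/
def SchurStable {n : ℕ} (A : Matrix (Fin n) (Fin n) ℝ) : Prop :=
  ∀ μ ∈ spectrum ℂ (A.map (algebraMap ℝ ℂ)), ‖μ‖ < 1

/-- The (real) spectral radius of a real square matrix, via its complex spectrum. -/
noncomputable def specRad {n : ℕ} (A : Matrix (Fin n) (Fin n) ℝ) : ℝ :=
  (spectralRadius ℂ (A.map (algebraMap ℝ ℂ))).toReal

/-- Smallest eigenvalue of a real symmetric matrix (via its real spectrum). -/
noncomputable def minEig {n : ℕ} (M : Matrix (Fin n) (Fin n) ℝ) : ℝ :=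
  sInf (spectrum ℝ M)

/-- Largest eigenvalue of a real symmetric matrix (via its real spectrum). -/
noncomputable def maxEig {n : ℕ} (M : Matrix (Fin n) (Fin n) ℝ) : ℝ :=
  sSup (spectrum ℝ M)

/-- `phiProd F k h = F (k+h-1) * ⋯ * F (k+1) * F k`. -/
def phiProd {n : ℕ} (F : ℕ → Matrix (Fin n) (Fin n) ℝ) (k : ℕ) :
    ℕ → Matrix (Fin n) (Fin n) ℝ
  | 0 => 1
  | h + 1 => F (k + h) * phiProd F k h

/-- The Riccati update map `P ↦ A P Aᵀ + Q − A P Cᵀ (C P Cᵀ + R)⁻¹ C P Aᵀ`. -/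
noncomputable def riccatiMap {n m : ℕ}
    (A : Matrix (Fin n) (Fin n) ℝ) (C : Matrix (Fin m) (Fin n) ℝ)
    (Q : Matrix (Fin n) (Fin n) ℝ) (R : Matrix (Fin m) (Fin m) ℝ)
    (P : Matrix (Fin n) (Fin n) ℝ) : Matrix (Fin n) (Fin n) ℝ :=
  A * P * Aᵀ + Q - A * P * Cᵀ * (C * P * Cᵀ + R)⁻¹ * (C * P * Aᵀ)

/-- The closed-loop (feedback) matrix `Ã_{P_k} = A_k − A_k P_k C_kᵀ (C_k P_k C_kᵀ + R_k)⁻¹ C_k`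
associated with a solution `P` of the DPRE. -/
noncomputable def feedback {n m : ℕ}
    (A : ℕ → Matrix (Fin n) (Fin n) ℝ) (C : ℕ → Matrix (Fin m) (Fin n) ℝ)
    (R : ℕ → Matrix (Fin m) (Fin m) ℝ) (P : ℕ → Matrix (Fin n) (Fin n) ℝ)
    (k : ℕ) : Matrix (Fin n) (Fin n) ℝ :=
  A k - A k * P k * (C k)ᵀ * (C k * P k * (C k)ᵀ + R k)⁻¹ * C k

open scoped Matrix.Norms.L2Operator

open scoped ENNReal NNReal

namespace S9

variable {n m l : ℕ}

lemma ct_eq (A : Matrix (Fin l) (Fin n) ℝ) : Aᴴ = Aᵀ :=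
  conjTranspose_eq_transpose_of_trivial A

lemma psd_conj {M : Matrix (Fin n) (Fin n) ℝ} (hM : M.PosSemidef)
    (B : Matrix (Fin l) (Fin n) ℝ) : (B * M * Bᵀ).PosSemidef := by
  have := hM.mul_mul_conjTranspose_same B
  rwa [ct_eq] at this

lemma herm_t {M : Matrix (Fin n) (Fin n) ℝ} (h : M.IsHermitian) : Mᵀ = M := by
  rw [← ct_eq]; exact h

lemma per_mod {α : Sort*} (f : ℕ → α) {T : ℕ} (hT : 0 < T) (hf : ∀ k, f (k + T) = f k) :
    ∀ j, f j = f (j % T) := by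
  intro j
  induction j using Nat.strong_induction_on with
  | _ j ih =>
    rcases lt_or_ge j T with h | h
    · rw [Nat.mod_eq_of_lt h]
    · have h1 : j - T < j := Nat.sub_lt (lt_of_lt_of_le hT h) hT
      have h2 : f j = f (j - T) := by
        conv_lhs => rw [← Nat.sub_add_cancel h]
        exact hf _
      rw [h2, ih _ h1, Nat.mod_eq_sub_mod h]

lemma spectral_diag {M : Matrix (Fin n) (Fin n) ℝ} (hM : M.IsHermitian) (c : ℝ) :
    M - c • 1 = (hM.eigenvectorUnitary : Matrix (Fin n) (Fin n) ℝ) *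
      diagonal (fun i => hM.eigenvalues i - c) *
      star (hM.eigenvectorUnitary : Matrix (Fin n) (Fin n) ℝ) := by
  set U : Matrix (Fin n) (Fin n) ℝ := (hM.eigenvectorUnitary : Matrix (Fin n) (Fin n) ℝ)
  have hU : U * star U = 1 := (Matrix.mem_unitaryGroup_iff).mp hM.eigenvectorUnitary.2
  have h1 : c • (1 : Matrix (Fin n) (Fin n) ℝ) = U * (c • 1) * star U := by
    rw [mul_smul_comm, mul_one, smul_mul_assoc, hU]
  calc M - c • 1 = U * diagonal (RCLike.ofReal ∘ hM.eigenvalues) * star U - U * (c • 1) * star U := by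
        rw [← h1]
        conv_lhs => rw [hM.spectral_theorem]
        rfl
    _ = U * (diagonal (RCLike.ofReal ∘ hM.eigenvalues) - c • 1) * star U := by
        rw [mul_sub, sub_mul]
    _ = U * diagonal (fun i => hM.eigenvalues i - c) * star U := by
        rw [smul_one_eq_diagonal, ← diagonal_sub]
        rfl

lemma sub_smul_one_psd {M : Matrix (Fin n) (Fin n) ℝ} (hM : M.IsHermitian) {c : ℝ}
    (h : ∀ i, c ≤ hM.eigenvalues i) : (M - c • 1).PosSemidef := by
  rw [spectral_diag hM c, Matrix.star_eq_conjTranspose]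
  exact (posSemidef_diagonal_iff.mpr fun i => sub_nonneg.mpr (h i)).mul_mul_conjTranspose_same _

lemma smul_one_sub_psd {M : Matrix (Fin n) (Fin n) ℝ} (hM : M.IsHermitian) {c : ℝ}
    (h : ∀ i, hM.eigenvalues i ≤ c) : (c • 1 - M).PosSemidef := by
  have h2 : c • (1 : Matrix (Fin n) (Fin n) ℝ) - M = -(M - c • 1) := by abel
  rw [h2, spectral_diag hM c, ← Matrix.neg_mul, ← Matrix.mul_neg, diagonal_neg,
    Matrix.star_eq_conjTranspose]
  exact (posSemidef_diagonal_iff.mpr fun i => by simpa using sub_nonneg.mpr (h i)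
    ).mul_mul_conjTranspose_same _

lemma quad_lower {M : Matrix (Fin n) (Fin n) ℝ} {c : ℝ} (h : (M - c • 1).PosSemidef)
    (x : Fin n → ℝ) : c * (x ⬝ᵥ x) ≤ x ⬝ᵥ M *ᵥ x := by
  have := h.dotProduct_mulVec_nonneg x
  simp only [star_trivial, sub_mulVec, dotProduct_sub, smul_mulVec, one_mulVec,
    dotProduct_smul, smul_eq_mul] at this
  linarith

lemma quad_upper {M : Matrix (Fin n) (Fin n) ℝ} {c : ℝ} (h : (c • 1 - M).PosSemidef)
    (x : Fin n → ℝ) : x ⬝ᵥ M *ᵥ x ≤ c * (x ⬝ᵥ x) := by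
  have := h.dotProduct_mulVec_nonneg x
  simp only [star_trivial, sub_mulVec, dotProduct_sub, smul_mulVec, one_mulVec,
    dotProduct_smul, smul_eq_mul] at this
  linarith

lemma psd_quad {M : Matrix (Fin n) (Fin n) ℝ} (h : M.PosSemidef) (x : Fin n → ℝ) :
    0 ≤ x ⬝ᵥ M *ᵥ x := by
  have := h.dotProduct_mulVec_nonneg x
  simpa only [star_trivial] using this

lemma minEig_le {M : Matrix (Fin n) (Fin n) ℝ} (hM : M.IsHermitian) (i : Fin n) :
    minEig M ≤ hM.eigenvalues i := by
  rw [minEig, hM.spectrum_real_eq_range_eigenvalues]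
  exact csInf_le (Set.finite_range _).bddBelow ⟨i, rfl⟩

lemma le_maxEig {M : Matrix (Fin n) (Fin n) ℝ} (hM : M.IsHermitian) (i : Fin n) :
    hM.eigenvalues i ≤ maxEig M := by
  rw [maxEig, hM.spectrum_real_eq_range_eigenvalues]
  exact le_csSup (Set.finite_range _).bddAbove ⟨i, rfl⟩

lemma minEig_eq [Nonempty (Fin n)] {M : Matrix (Fin n) (Fin n) ℝ} (hM : M.IsHermitian) :
    ∃ i, minEig M = hM.eigenvalues i := by
  have h := Set.Nonempty.csInf_mem (Set.range_nonempty hM.eigenvalues) (Set.finite_range _)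
  rw [minEig, hM.spectrum_real_eq_range_eigenvalues]
  obtain ⟨i, hi⟩ := h
  exact ⟨i, hi.symm⟩

lemma minEig_pos [Nonempty (Fin n)] {M : Matrix (Fin n) (Fin n) ℝ} (hM : M.PosDef) :
    0 < minEig M := by
  obtain ⟨i, hi⟩ := minEig_eq hM.1
  rw [hi]
  exact hM.eigenvalues_pos i

lemma joseph (A : Matrix (Fin n) (Fin n) ℝ) (C : Matrix (Fin m) (Fin n) ℝ)
    (Q : Matrix (Fin n) (Fin n) ℝ) (R : Matrix (Fin m) (Fin m) ℝ)
    (P : Matrix (Fin n) (Fin n) ℝ) (hP : P.PosSemidef) (hR : R.PosDef) :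
    riccatiMap A C Q R P =
      (A - A * P * Cᵀ * (C * P * Cᵀ + R)⁻¹ * C) * P * (A - A * P * Cᵀ * (C * P * Cᵀ + R)⁻¹ * C)ᵀ
        + Q + (A * P * Cᵀ * (C * P * Cᵀ + R)⁻¹) * R * (A * P * Cᵀ * (C * P * Cᵀ + R)⁻¹)ᵀ := by
  have hPt : Pᵀ = P := herm_t hP.1
  have hSpd : (C * P * Cᵀ + R).PosDef := Matrix.PosDef.posSemidef_add (psd_conj hP C) hR
  have hSt : (C * P * Cᵀ + R)ᵀ = (C * P * Cᵀ + R) := herm_t hSpd.isHermitian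
  have hSd : IsUnit (C * P * Cᵀ + R).det := hSpd.det_pos.ne'.isUnit
  set S := C * P * Cᵀ + R with hSdef
  set K := A * P * Cᵀ * S⁻¹ with hKdef
  have hKS : K * S = A * P * Cᵀ := by
    rw [hKdef, Matrix.mul_assoc, Matrix.nonsing_inv_mul _ hSd, Matrix.mul_one]
  have hKCP : K * (C * P * Cᵀ) = A * P * Cᵀ - K * R := by
    have h := hKS
    rw [hSdef, Matrix.mul_add] at h
    exact eq_sub_of_add_eq h
  have hKt : Kᵀ = S⁻¹ * (C * (P * Aᵀ)) := by
    rw [hKdef]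
    simp [transpose_mul, Matrix.transpose_nonsing_inv, hSt, hPt, Matrix.mul_assoc]
  have h3 : A * P * Cᵀ * Kᵀ = K * (C * P * Aᵀ) := by
    rw [hKt, hKdef]
    simp [Matrix.mul_assoc]
  have h2 : (A - K * C) * P * (A - K * C)ᵀ =
      A * P * Aᵀ - A * P * Cᵀ * Kᵀ - K * (C * P * Aᵀ) + (K * (C * P * Cᵀ)) * Kᵀ := by
    rw [transpose_sub, transpose_mul]
    simp only [Matrix.sub_mul, Matrix.mul_sub, Matrix.mul_assoc]
    abel
  have h4 : A * P * Cᵀ * (C * P * Cᵀ + R)⁻¹ * (C * P * Aᵀ) = K * (C * P * Aᵀ) := by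
    rw [hKdef]
  rw [riccatiMap, h2, hKCP]
  simp only [Matrix.sub_mul]
  rw [h3, h4]
  simp only [Matrix.mul_assoc]
  abel

lemma re_quad (M : Matrix (Fin n) (Fin n) ℝ) (v : Fin n → ℂ) :
    (star v ⬝ᵥ (M.map (algebraMap ℝ ℂ)) *ᵥ v).re =
      (fun i => (v i).re) ⬝ᵥ M *ᵥ (fun i => (v i).re) +
      (fun i => (v i).im) ⬝ᵥ M *ᵥ (fun i => (v i).im) := by
  simp only [dotProduct, mulVec, map_apply, Pi.star_apply, Finset.mul_sum, Complex.re_sum]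
  rw [← Finset.sum_add_distrib]
  refine Finset.sum_congr rfl fun i _ => ?_
  rw [← Finset.sum_add_distrib]
  refine Finset.sum_congr rfl fun j _ => ?_
  simp [Complex.mul_re, Complex.mul_im, RCLike.star_def, Complex.conj_re, Complex.conj_im]

lemma exists_eigenvec {M : Matrix (Fin n) (Fin n) ℝ} {μ : ℂ}
    (h : μ ∈ spectrum ℂ (M.map (algebraMap ℝ ℂ))) :
    ∃ v : Fin n → ℂ, v ≠ 0 ∧ (Mᵀ.map (algebraMap ℝ ℂ)) *ᵥ v = μ • v := by
  rw [spectrum.mem_iff] at h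
  have hdet : (μ • (1 : Matrix (Fin n) (Fin n) ℂ) - M.map (algebraMap ℝ ℂ)).det = 0 := by
    by_contra hd
    exact h (by
      rw [Algebra.algebraMap_eq_smul_one]
      exact (Matrix.isUnit_iff_isUnit_det _).mpr (isUnit_iff_ne_zero.mpr hd))
  have hdetT : (μ • (1 : Matrix (Fin n) (Fin n) ℂ) - Mᵀ.map (algebraMap ℝ ℂ)).det = 0 := by
    rw [← Matrix.det_transpose]
    simpa [transpose_sub, transpose_smul, transpose_one, Matrix.transpose_map] using hdet
  obtain ⟨v, hv0, hv⟩ := (Matrix.exists_mulVec_eq_zero_iff).mpr hdetT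
  refine ⟨v, hv0, ?_⟩
  rw [sub_mulVec, smul_mulVec, one_mulVec, sub_eq_zero] at hv
  exact hv.symm

lemma star_mulVec_real (M : Matrix (Fin n) (Fin n) ℝ) (v : Fin n → ℂ) :
    (M.map (algebraMap ℝ ℂ)) *ᵥ (star v) = star ((M.map (algebraMap ℝ ℂ)) *ᵥ v) := by
  funext i
  simp only [mulVec, dotProduct, map_apply, Pi.star_apply, star_sum, star_mul']
  refine Finset.sum_congr rfl fun j _ => ?_
  simp [Complex.star_def, Complex.conj_ofReal, mul_comm]

lemma quad_eig (Φ Pk : Matrix (Fin n) (Fin n) ℝ) {μ : ℂ} {v : Fin n → ℂ}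
    (hv : ((Φ.map (algebraMap ℝ ℂ))ᵀ) *ᵥ v = μ • v) :
    (star v ⬝ᵥ ((Φ * Pk * Φᵀ).map (algebraMap ℝ ℂ)) *ᵥ v).re =
      ‖μ‖ ^ 2 * (star v ⬝ᵥ (Pk.map (algebraMap ℝ ℂ)) *ᵥ v).re := by
  set f := algebraMap ℝ ℂ
  set Φc := Φ.map f
  set Pc := Pk.map f
  have hmap : (Φ * Pk * Φᵀ).map f = Φc * Pc * Φcᵀ := by
    rw [Matrix.map_mul, Matrix.map_mul, Matrix.transpose_map]
  have h1 : (Φc * Pc * Φcᵀ) *ᵥ v = Φc *ᵥ (Pc *ᵥ (Φcᵀ *ᵥ v)) := by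
    rw [← mulVec_mulVec, ← mulVec_mulVec]
  have h2 : star v ᵥ* Φc = (starRingEnd ℂ μ) • star v := by
    have h0 : star v ᵥ* Φc = Φcᵀ *ᵥ star v := by
      rw [← transpose_transpose Φc, vecMul_transpose, transpose_transpose]
    rw [h0, ← Matrix.transpose_map, star_mulVec_real, Matrix.transpose_map, hv, star_smul]
    rfl
  rw [hmap, h1, hv, mulVec_smul, mulVec_smul, dotProduct_smul, dotProduct_mulVec, h2,
    smul_dotProduct, smul_smul, smul_eq_mul, Complex.mul_conj']
  simp [← Complex.ofReal_pow]

end S9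

open S9

/-- for an SPPS solution `P_·` of the DPRE, each monodromy matrix
`Φ_{P_k} = Ã_{P_{k+𝒯−1}}···Ã_{P_k}` satisfies `ρ(Φ_{P_k}) ≤ √(1 − λ_min(Q_·)/λ_max(P_·))`
and `‖Φ_{P_k}‖₂ ≤ √(λ_max(P_·)/λ_min(Q_·))`; in particular it is Schur stable. -/
theorem statement9 {n m T : ℕ} (hT : 1 ≤ T)
    (A : ℕ → Matrix (Fin n) (Fin n) ℝ) (C : ℕ → Matrix (Fin m) (Fin n) ℝ)
    (Q : ℕ → Matrix (Fin n) (Fin n) ℝ) (R : ℕ → Matrix (Fin m) (Fin m) ℝ)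
    (hAper : ∀ k, A (k + T) = A k) (hCper : ∀ k, C (k + T) = C k)
    (hQper : ∀ k, Q (k + T) = Q k) (hRper : ∀ k, R (k + T) = R k)
    (hQpd : ∀ k, (Q k).PosDef) (hRpd : ∀ k, (R k).PosDef)
    (P : ℕ → Matrix (Fin n) (Fin n) ℝ)
    (hPper : ∀ k, P (k + T) = P k) (hPpsd : ∀ k, (P k).PosSemidef)
    (hP : ∀ k, P (k + 1) = riccatiMap (A k) (C k) (Q k) (R k) (P k)) :
    ∀ k : ℕ,
      specRad (phiProd (feedback A C R P) k T) ≤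
        Real.sqrt (1 - sInf (Set.range fun j => minEig (Q j)) /
          sSup (Set.range fun j => maxEig (P j))) ∧
      ‖phiProd (feedback A C R P) k T‖ ≤
        Real.sqrt (sSup (Set.range fun j => maxEig (P j)) /
          sInf (Set.range fun j => minEig (Q j))) ∧
      SchurStable (phiProd (feedback A C R P) k T) := by
  intro k
  set Fb := feedback A C R P with hFb
  set q := sInf (Set.range fun j => minEig (Q j)) with hqdef
  set p := sSup (Set.range fun j => maxEig (P j)) with hpdef
  -- trivial case n = 0
  rcases Nat.eq_zero_or_pos n with hn | hn
  · subst hn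
    haveI : Subsingleton (Matrix (Fin 0) (Fin 0) ℂ) := ⟨fun a b => by ext i j; exact i.elim0⟩
    haveI : Subsingleton (Matrix (Fin 0) (Fin 0) ℝ) := ⟨fun a b => by ext i j; exact i.elim0⟩
    have hspec : spectrum ℂ ((phiProd Fb k T).map (algebraMap ℝ ℂ)) = ∅ := by
      ext μ
      simp only [spectrum.mem_iff, Set.mem_empty_iff_false, iff_false, not_not]
      exact isUnit_of_subsingleton _
    refine ⟨?_, ?_, ?_⟩
    · have h0 : spectralRadius ℂ ((phiProd Fb k T).map (algebraMap ℝ ℂ)) = 0 := by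
        rw [spectralRadius, hspec]
        simp
      rw [specRad, h0]
      simpa using Real.sqrt_nonneg _
    · have h0 : phiProd Fb k T = 0 := Subsingleton.elim _ _
      rw [h0, norm_zero]
      exact Real.sqrt_nonneg _
    · intro μ hμ
      rw [hspec] at hμ
      exact absurd hμ (Set.notMem_empty μ)
  haveI hnn : Nonempty (Fin n) := Fin.pos_iff_nonempty.mp hn
  have hT' : 0 < T := hT
  -- facts about q and p
  have hfin1 : (Set.range fun j => minEig (Q j)).Finite := by
    apply ((Set.finite_Iio T).image _).subset
    rintro x ⟨j, rfl⟩
    exact ⟨j % T, Nat.mod_lt _ hT', (per_mod _ hT' (fun j => by simp [hQper j]) j).symm⟩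
  have hfin2 : (Set.range fun j => maxEig (P j)).Finite := by
    apply ((Set.finite_Iio T).image _).subset
    rintro x ⟨j, rfl⟩
    exact ⟨j % T, Nat.mod_lt _ hT', (per_mod _ hT' (fun j => by simp [hPper j]) j).symm⟩
  have hql : ∀ j, q ≤ minEig (Q j) := fun j => csInf_le hfin1.bddBelow ⟨j, rfl⟩
  have hpu : ∀ j, maxEig (P j) ≤ p := fun j => le_csSup hfin2.bddAbove ⟨j, rfl⟩
  have hqpos : 0 < q := by
    obtain ⟨j, hj⟩ := Set.Nonempty.csInf_mem (Set.range_nonempty _) hfin1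
    rw [hqdef, ← hj]
    exact minEig_pos (hQpd j)
  -- PSD bounds from eigenvalues
  have hQlb : ∀ j, (Q j - q • 1).PosSemidef := fun j =>
    sub_smul_one_psd (hQpd j).1 fun i => (hql j).trans (minEig_le _ i)
  have hPub : ∀ j, (p • 1 - P j).PosSemidef := fun j =>
    smul_one_sub_psd (hPpsd j).1 fun i => (le_maxEig _ i).trans (hpu j)
  -- one-step inequality (Joseph form)
  have hstep : ∀ j, (P (j + 1) - (Fb j * P j * (Fb j)ᵀ + Q j)).PosSemidef := by
    intro j
    have hj := joseph (A j) (C j) (Q j) (R j) (P j) (hPpsd j) (hRpd j)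
    have e : P (j + 1) - (Fb j * P j * (Fb j)ᵀ + Q j) =
        (A j * P j * (C j)ᵀ * (C j * P j * (C j)ᵀ + R j)⁻¹) * R j *
          (A j * P j * (C j)ᵀ * (C j * P j * (C j)ᵀ + R j)⁻¹)ᵀ := by
      rw [hP j, hj]
      simp only [hFb, feedback]
      abel
    rw [e]
    exact psd_conj (hRpd j).posSemidef _
  -- positive definiteness of P
  have hPpd : ∀ j, (P j).PosDef := by
    intro j
    have e1 : j + T - 1 + 1 = j + T := by omega
    have h1 := hP (j + T - 1)
    rw [e1, hPper j] at h1
    rw [h1, joseph _ _ _ _ _ (hPpsd _) (hRpd _)]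
    exact Matrix.PosDef.add_posSemidef
      (Matrix.PosDef.posSemidef_add (psd_conj (hPpsd _) _) (hQpd _))
      (psd_conj (hRpd _).posSemidef _)
  have hppos : 0 < p := by
    obtain ⟨i⟩ := hnn
    exact lt_of_lt_of_le ((hPpd 0).eigenvalues_pos i) ((le_maxEig _ i).trans (hpu 0))
  -- monodromy induction
  have hmono : ∀ h, (P (k + h) - phiProd Fb k h * P k * (phiProd Fb k h)ᵀ).PosSemidef := by
    intro h
    induction h with
    | zero => simpa [phiProd] using (Matrix.PosSemidef.zero :
        (0 : Matrix (Fin n) (Fin n) ℝ).PosSemidef)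
    | succ h ih =>
      have e : P (k + (h + 1)) - phiProd Fb k (h + 1) * P k * (phiProd Fb k (h + 1))ᵀ =
          (P (k + h + 1) - (Fb (k + h) * P (k + h) * (Fb (k + h))ᵀ + Q (k + h)))
          + Fb (k + h) * (P (k + h) - phiProd Fb k h * P k * (phiProd Fb k h)ᵀ) * (Fb (k + h))ᵀ
          + Q (k + h) := by
        show P (k + h + 1) - (Fb (k + h) * phiProd Fb k h) * P k *
          (Fb (k + h) * phiProd Fb k h)ᵀ = _
        simp only [transpose_mul, Matrix.mul_sub, Matrix.sub_mul, Matrix.mul_add,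
          Matrix.add_mul, Matrix.mul_assoc]
        abel
      rw [e]
      exact ((hstep (k + h)).add (psd_conj ih (Fb (k + h)))).add (hQpd (k + h)).posSemidef
  obtain ⟨t, rfl⟩ : ∃ t, T = t + 1 := ⟨T - 1, by omega⟩
  set Φ := phiProd Fb k (t + 1) with hΦ
  have key : (P k - Φ * P k * Φᵀ - Q (k + t)).PosSemidef := by
    have e2 : P (k + (t + 1)) - Φ * P k * Φᵀ - Q (k + t) =
        (P (k + t + 1) - (Fb (k + t) * P (k + t) * (Fb (k + t))ᵀ + Q (k + t)))
        + Fb (k + t) * (P (k + t) - phiProd Fb k t * P k * (phiProd Fb k t)ᵀ) * (Fb (k + t))ᵀ := by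
      show P (k + t + 1) - (Fb (k + t) * phiProd Fb k t) * P k *
        (Fb (k + t) * phiProd Fb k t)ᵀ - Q (k + t) = _
      simp only [transpose_mul, Matrix.mul_sub, Matrix.sub_mul, Matrix.mul_assoc]
      abel
    have hk2 := (hstep (k + t)).add (psd_conj (hmono t) (Fb (k + t)))
    rw [← e2] at hk2
    rwa [hPper k] at hk2
  have hPq : (P k - q • 1).PosSemidef := by
    have e3 : P k - q • 1 =
        (P k - Φ * P k * Φᵀ - Q (k + t)) + Φ * P k * Φᵀ + (Q (k + t) - q • 1) := by abel
    rw [e3]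
    exact (key.add (psd_conj (hPpsd k) Φ)).add (hQlb (k + t))
  -- eigenvalue modulus bound
  have claim : ∀ μ ∈ spectrum ℂ (Φ.map (algebraMap ℝ ℂ)), ‖μ‖ ^ 2 ≤ 1 - q / p := by
    intro μ hμ
    obtain ⟨v, hv0, hv⟩ := exists_eigenvec hμ
    have hs1 : (0 : ℝ) < (fun i => (v i).re) ⬝ᵥ (fun i => (v i).re) +
        (fun i => (v i).im) ⬝ᵥ (fun i => (v i).im) := by
      have hex : ∃ i, v i ≠ 0 := by
        by_contra hc
        push_neg at hc
        exact hv0 (funext fun i => hc i)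
      obtain ⟨i0, hi0⟩ := hex
      have he : (fun i => (v i).re) ⬝ᵥ (fun i => (v i).re) +
          (fun i => (v i).im) ⬝ᵥ (fun i => (v i).im) =
          ∑ i, ((v i).re * (v i).re + (v i).im * (v i).im) := by
        rw [dotProduct, dotProduct, ← Finset.sum_add_distrib]
      rw [he]
      refine Finset.sum_pos' (fun i _ => add_nonneg (mul_self_nonneg _) (mul_self_nonneg _)) ⟨i0, Finset.mem_univ _, ?_⟩
      have := Complex.normSq_pos.mpr hi0
      simpa [Complex.normSq_apply] using this
    have hq1 := psd_quad key (fun i => (v i).re)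
    have hq2 := psd_quad key (fun i => (v i).im)
    simp only [sub_mulVec, dotProduct_sub] at hq1 hq2
    have hQlow_a := quad_lower (hQlb (k + t)) (fun i => (v i).re)
    have hQlow_b := quad_lower (hQlb (k + t)) (fun i => (v i).im)
    have hPup_a := quad_upper (hPub k) (fun i => (v i).re)
    have hPup_b := quad_upper (hPub k) (fun i => (v i).im)
    have hG1 := psd_quad (psd_conj (hPpsd k) Φ) (fun i => (v i).re)
    have hG2 := psd_quad (psd_conj (hPpsd k) Φ) (fun i => (v i).im)
    have hquadeig := quad_eig Φ (P k) (v := v) (μ := μ) (by rw [← Matrix.transpose_map]; exact hv)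
    rw [re_quad, re_quad] at hquadeig
    have hm : (0 : ℝ) ≤ ‖μ‖ ^ 2 := sq_nonneg _
    -- abbreviations
    set sa := (fun i => (v i).re) ⬝ᵥ (P k) *ᵥ (fun i => (v i).re) +
      (fun i => (v i).im) ⬝ᵥ (P k) *ᵥ (fun i => (v i).im) with hsa
    have hsP_pos : 0 < sa := by nlinarith
    have h1m : 0 < 1 - ‖μ‖ ^ 2 := by nlinarith
    have hfin : q ≤ (1 - ‖μ‖ ^ 2) * p := by nlinarith
    have h2 : q / p ≤ 1 - ‖μ‖ ^ 2 := by
      rw [div_le_iff₀ hppos]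
      linarith
    linarith
  refine ⟨?_, ?_, ?_⟩
  · -- spectral radius bound
    have hb : spectralRadius ℂ (Φ.map (algebraMap ℝ ℂ)) ≤
        ENNReal.ofReal (Real.sqrt (1 - q / p)) := by
      rw [spectralRadius]
      refine iSup₂_le fun μ hμ => ?_
      have h1 : ‖μ‖ ≤ Real.sqrt (1 - q / p) := by
        have h2 : ‖μ‖ = Real.sqrt (‖μ‖ ^ 2) := (Real.sqrt_sq (norm_nonneg μ)).symm
        rw [h2]
        exact Real.sqrt_le_sqrt (claim μ hμ)
      calc ((‖μ‖₊ : ℝ≥0∞)) = ENNReal.ofReal ‖μ‖ := (ofReal_norm μ).symm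
        _ ≤ _ := ENNReal.ofReal_le_ofReal h1
    have h3 := ENNReal.toReal_mono ENNReal.ofReal_ne_top hb
    rw [specRad]
    rwa [ENNReal.toReal_ofReal (Real.sqrt_nonneg _)] at h3
  · -- norm bound
    have hnorm : ∀ x : Fin n → ℝ, (Φᵀ *ᵥ x) ⬝ᵥ (Φᵀ *ᵥ x) ≤ (p / q) * (x ⬝ᵥ x) := by
      intro x
      have h1 : q * ((Φᵀ *ᵥ x) ⬝ᵥ (Φᵀ *ᵥ x)) ≤ (Φᵀ *ᵥ x) ⬝ᵥ (P k) *ᵥ (Φᵀ *ᵥ x) :=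
        quad_lower hPq _
      have h2 : x ⬝ᵥ (Φ * P k * Φᵀ) *ᵥ x = (Φᵀ *ᵥ x) ⬝ᵥ (P k) *ᵥ (Φᵀ *ᵥ x) := by
        rw [← mulVec_mulVec, ← mulVec_mulVec, dotProduct_mulVec x Φ]
        congr 1
        rw [← transpose_transpose Φ, vecMul_transpose, transpose_transpose]
      have h4 := psd_quad key x
      simp only [sub_mulVec, dotProduct_sub] at h4
      have h5 := quad_upper (hPub k) x
      have h6 := quad_lower (hQlb (k + t)) x
      have h7 : (0 : ℝ) ≤ x ⬝ᵥ x := by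
        rw [dotProduct]
        exact Finset.sum_nonneg fun i _ => mul_self_nonneg _
      rw [div_mul_eq_mul_div, le_div_iff₀ hqpos]
      nlinarith
    have hTnorm : ‖Φ‖ = ‖Φᵀ‖ := by
      rw [← ct_eq Φ]
      exact (Matrix.l2_opNorm_conjTranspose Φ).symm
    rw [hTnorm, Matrix.l2_opNorm_def]
    refine ContinuousLinearMap.opNorm_le_bound _ (Real.sqrt_nonneg _) fun x => ?_
    rw [LinearEquiv.trans_apply, LinearMap.coe_toContinuousLinearMap',
      Matrix.toEuclideanLin_apply]
    have hny : ∀ w : Fin n → ℝ, ‖WithLp.toLp 2 w‖ = Real.sqrt (w ⬝ᵥ w) := by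
      intro w
      rw [EuclideanSpace.norm_eq, dotProduct]
      congr 1
      refine Finset.sum_congr rfl fun i _ => ?_
      show ‖w i‖ ^ 2 = w i * w i
      rw [Real.norm_eq_abs, sq_abs, pow_two]
    have hnx : ‖x‖ = Real.sqrt
        (x.ofLp ⬝ᵥ x.ofLp) := by
      rw [EuclideanSpace.norm_eq, dotProduct]
      congr 1
      refine Finset.sum_congr rfl fun i _ => ?_
      show ‖x.ofLp i‖ ^ 2 = x.ofLp i * x.ofLp i
      rw [Real.norm_eq_abs, sq_abs, pow_two]
    rw [hny, hnx, ← Real.sqrt_mul (by positivity)]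
    exact Real.sqrt_le_sqrt (hnorm _)
  · -- Schur stability
    intro μ hμ
    have h1 := claim μ hμ
    have hqp : 0 < q / p := div_pos hqpos hppos
    nlinarith [norm_nonneg μ]
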